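/- arXiv:2011.00389 — 3 statements merged into one kernel-verified Lean document; each statement's English description precedes it below -/
import Mathlib

section
/- Let L = L_I ∪ L_U with L_I ∩ L_U = ∅, let S = (S, s0, T_S) and I = (Q, q0, T_I) be IOLTSs over L. Then I ioco S (i.e., for every σ ∈ otr(S), out(q0 after σ) ⊆ out(s0 after σ)) holds if and only if I conf_{D,F} S holds with D = otr(S)·L_U (the concatenation of the language otr(S) with the set of one-letter words over L_U) and F = ∅. -/
/-- Observable paths of an IOLTS: `ObsPath step s σ q` means there is a path
from `s` to `q` whose sequence of non-τ labels (τ = `none`) is `σ`. -/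
inductive ObsPath {S L : Type*} (step : S → Option L → S → Prop) :
    S → List L → S → Prop
  | refl (s : S) : ObsPath step s [] s
  | tau {s r q : S} {σ : List L} :
      step s none r → ObsPath step r σ q → ObsPath step s σ q
  | lbl {s r q : S} {l : L} {σ : List L} :
      step s (some l) r → ObsPath step r σ q → ObsPath step s (l :: σ) q

/-- Observable trace language of an IOLTS with initial state `s0`. -/
def otr {S L : Type*} (step : S → Option L → S → Prop) (s0 : S) :
    Set (List L) :=
  {σ | ∃ q, ObsPath step s0 σ q}

/-- `s after σ`: the set of states reachable from `s` via observable path `σ`. -/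
def after {S L : Type*} (step : S → Option L → S → Prop) (s : S) (σ : List L) :
    Set S :=
  {q | ObsPath step s σ q}

/-- `out(Q')`: the set of output labels enabled in some state of `Q'`. -/
def outOf {S L : Type*} (LU : Set L) (step : S → Option L → S → Prop)
    (Q' : Set S) : Set L :=
  {x | x ∈ LU ∧ ∃ q ∈ Q', ∃ q', step q (some x) q'}


lemma obsPath_snoc_decomp {S L : Type*} {step : S → Option L → S → Prop}
    {s q : S} {w : List L} (h : ObsPath step s w q) :
    ∀ σ x, w = σ ++ [x] → ∃ r r', ObsPath step s σ r ∧ step r (some x) r' := by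
  induction h with
  | refl s => intro σ x hx; simp at hx
  | tau hs _ ih =>
      intro σ x hx
      obtain ⟨r, r', hp, hstep⟩ := ih σ x hx
      exact ⟨r, r', ObsPath.tau hs hp, hstep⟩
  | lbl hs hp ih =>
      intro σ x hx
      cases σ with
      | nil =>
          simp at hx
          obtain ⟨h1, h2⟩ := hx
          subst h1
          subst h2
          cases hp with
          | _ => exact ⟨_, _, ObsPath.refl _, hs⟩
      | cons a σ' =>
          simp at hx
          obtain ⟨h1, h2⟩ := hx
          subst h1
          obtain ⟨r, r', hp', hstep⟩ := ih σ' x h2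
          exact ⟨r, r', ObsPath.lbl hs hp', hstep⟩

lemma obsPath_snoc {S L : Type*} {step : S → Option L → S → Prop}
    {s r r' : S} {σ : List L} {x : L} (h : ObsPath step s σ r)
    (hs : step r (some x) r') : ObsPath step s (σ ++ [x]) r' := by
  induction h with
  | refl s => exact ObsPath.lbl hs (ObsPath.refl _)
  | tau h1 _ ih => exact ObsPath.tau h1 (ih hs)
  | lbl h1 _ ih => exact ObsPath.lbl h1 (ih hs)

lemma otr_snoc_iff {S L : Type*} {step : S → Option L → S → Prop}
    {s0 : S} {σ : List L} {x : L} :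
    (σ ++ [x]) ∈ otr step s0 ↔
      ∃ r, ObsPath step s0 σ r ∧ ∃ r', step r (some x) r' := by
  constructor
  · rintro ⟨q, hq⟩
    obtain ⟨r, r', hp, hstep⟩ := obsPath_snoc_decomp hq σ x rfl
    exact ⟨r, hp, r', hstep⟩
  · rintro ⟨r, hp, r', hstep⟩
    exact ⟨r', obsPath_snoc hp hstep⟩

/-- `I ioco S` holds iff `I conf_{D,F} S` with
`D = otr(S)·L_U` and `F = ∅`. -/
theorem ioco_iff_conf {SS Q L : Type*} (LI LU : Set L)
    (h_union : LI ∪ LU = Set.univ) (h_disj : LI ∩ LU = ∅)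
    (stepS : SS → Option L → SS → Prop) (s0 : SS)
    (stepI : Q → Option L → Q → Prop) (q0 : Q) :
    (∀ σ ∈ otr stepS s0,
        outOf LU stepI (after stepI q0 σ) ⊆ outOf LU stepS (after stepS s0 σ)) ↔
      (let D : Set (List L) := {w | ∃ σ ∈ otr stepS s0, ∃ x ∈ LU, w = σ ++ [x]}
       let F : Set (List L) := ∅
       (∀ σ ∈ otr stepI q0 ∩ F, σ ∉ otr stepS s0) ∧
       (∀ σ ∈ otr stepI q0 ∩ D, σ ∈ otr stepS s0)) := by
  constructor
  · intro hioco
    refine ⟨by simp, ?_⟩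
    rintro σ ⟨hI, σ', hσ'S, x, hxU, rfl⟩
    obtain ⟨r, hp, r', hstep⟩ := otr_snoc_iff.mp hI
    have hx : x ∈ outOf LU stepI (after stepI q0 σ') := ⟨hxU, r, hp, r', hstep⟩
    obtain ⟨_, q, hq, q', hq'⟩ := hioco σ' hσ'S hx
    exact otr_snoc_iff.mpr ⟨q, hq, q', hq'⟩
  · rintro ⟨-, hD⟩ σ hσS x ⟨hxU, q, hq, q', hq'⟩
    have hIn : (σ ++ [x]) ∈ otr stepI q0 := otr_snoc_iff.mpr ⟨q, hq, q', hq'⟩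
    have : (σ ++ [x]) ∈ otr stepS s0 := hD _ ⟨hIn, σ, hσS, x, hxU, rfl⟩
    obtain ⟨r, hp, r', hstep⟩ := otr_snoc_iff.mp this
    exact ⟨hxU, r, hp, r', hstep⟩
end

section
/- Let L = L_I ∪ L_U with L_I ∩ L_U = ∅, and let S and I be IOLTSs over L with initial states s0 and q0. Then I ioco S holds if and only if otr(I) ∩ ((otr(S)·L_U) \ otr(S)) = ∅, i.e., there is no word of the form σ·x with σ ∈ otr(S), x ∈ L_U, σ·x ∈ otr(I) and σ·x ∉ otr(S). -/
lemma ObsPath.append_single {S L : Type*} {step : S → Option L → S → Prop}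
    {s r r' : S} {σ : List L} {x : L}
    (h : ObsPath step s σ r) (hx : step r (some x) r') :
    ObsPath step s (σ ++ [x]) r' := by
  induction h with
  | refl s => exact ObsPath.lbl hx (ObsPath.refl _)
  | tau hτ _ ih => exact ObsPath.tau hτ (ih hx)
  | lbl hl _ ih => exact ObsPath.lbl hl (ih hx)

lemma ObsPath.split_single {S L : Type*} {step : S → Option L → S → Prop}
    {s q : S} {σ : List L} {x : L}
    (h : ObsPath step s (σ ++ [x]) q) :
    ∃ r r', ObsPath step s σ r ∧ step r (some x) r' := by
  suffices H : ∀ τ, ObsPath step s τ q → ∀ σ' : List L, τ = σ' ++ [x] →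
      ∃ r r', ObsPath step s σ' r ∧ step r (some x) r' from H _ h σ rfl
  clear h
  intro τ h
  induction h with
  | refl s => intro σ' hσ'; exact absurd hσ' (by simp)
  | @tau s r q'' σ0 hτ hp ih =>
    intro σ' hσ'
    obtain ⟨r, r', h1, h2⟩ := ih σ' hσ'
    exact ⟨r, r', ObsPath.tau hτ h1, h2⟩
  | @lbl s r q l σ' hl hp ih =>
    intro σ'' hσ''
    cases σ'' with
    | nil =>
      simp at hσ''
      obtain ⟨rfl, rfl⟩ := hσ''
      exact ⟨s, r, ObsPath.refl _, hl⟩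
    | cons a σ =>
      simp at hσ''
      obtain ⟨rfl, h2⟩ := hσ''
      obtain ⟨r1, r1', ha, hb⟩ := ih σ h2
      exact ⟨r1, r1', ObsPath.lbl hl ha, hb⟩

/-- `I ioco S` holds iff `otr(I) ∩ ((otr(S)·L_U) \ otr(S)) = ∅`,
i.e. there is no word `σ ++ [x]` with `σ ∈ otr(S)`, `x ∈ L_U`,
`σ ++ [x] ∈ otr(I)` and `σ ++ [x] ∉ otr(S)`. -/
theorem ioco_iff_inter_empty {SS Q L : Type*} (LI LU : Set L)
    (h_union : LI ∪ LU = Set.univ) (h_disj : LI ∩ LU = ∅)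
    (stepS : SS → Option L → SS → Prop) (s0 : SS)
    (stepI : Q → Option L → Q → Prop) (q0 : Q) :
    (∀ σ ∈ otr stepS s0,
        outOf LU stepI (after stepI q0 σ) ⊆ outOf LU stepS (after stepS s0 σ)) ↔
      otr stepI q0 ∩
        ({w | ∃ σ ∈ otr stepS s0, ∃ x ∈ LU, w = σ ++ [x]} \ otr stepS s0) = ∅ := by
  constructor
  · intro hioco
    ext w
    simp only [Set.mem_inter_iff, Set.mem_diff, Set.mem_setOf_eq, Set.mem_empty_iff_false,
      iff_false, not_and, not_not]
    rintro ⟨q, hq⟩ ⟨σ, hσS, x, hxU, rfl⟩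
    obtain ⟨r, r', h1, h2⟩ := ObsPath.split_single hq
    have hx : x ∈ outOf LU stepS (after stepS s0 σ) :=
      hioco σ hσS ⟨hxU, r, h1, r', h2⟩
    obtain ⟨_, p, hp, p', hstep⟩ := hx
    exact ⟨p', ObsPath.append_single hp hstep⟩
  · intro hempty σ hσS x hx
    obtain ⟨hxU, q, hq, q', hstep⟩ := hx
    have hmem : σ ++ [x] ∈ otr stepS s0 := by
      by_contra hnot
      have : (σ ++ [x]) ∈ otr stepI q0 ∩
          ({w | ∃ σ ∈ otr stepS s0, ∃ x ∈ LU, w = σ ++ [x]} \ otr stepS s0) :=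
        ⟨⟨q', ObsPath.append_single hq hstep⟩, ⟨σ, hσS, x, hxU, rfl⟩, hnot⟩
      simp [hempty] at this
    obtain ⟨p, hp⟩ := hmem
    obtain ⟨r, r', h1, h2⟩ := ObsPath.split_single hp
    exact ⟨hxU, r, h1, r', h2⟩
end

section
/- Let A_S, A_D, A_F be DFAs over a finite alphabet L with state types of cardinality n_S, n_D, n_F respectively. Then there exists a DFA T over L with a state type of cardinality at most (n_S + 1)² · n_D · n_F whose accepted language is (L(A_D) ∩ L(A_S)ᶜ) ∪ (L(A_F) ∩ L(A_S)), where L(A_S)ᶜ = L* \ L(A_S). -/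
/-- given DFAs `A_S`, `A_D`, `A_F` over `L` with `n_S`, `n_D`, `n_F`
states, there is a DFA `T` with at most `(n_S + 1)² · n_D · n_F` states accepting
exactly `(L(A_D) ∩ L(A_S)ᶜ) ∪ (L(A_F) ∩ L(A_S))`. -/
theorem test_suite_automaton {L QS QD QF : Type*} [Fintype L]
    [Fintype QS] [Fintype QD] [Fintype QF]
    (AS : DFA L QS) (AD : DFA L QD) (AF : DFA L QF) :
    ∃ (Q : Type) (_ : Fintype Q) (T : DFA L Q),
      Fintype.card Q ≤ (Fintype.card QS + 1) ^ 2 * Fintype.card QD * Fintype.card QF ∧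
      ({w | w ∈ T.accepts} : Set (List L)) =
        ({w | w ∈ AD.accepts} ∩ {w | w ∈ AS.accepts}ᶜ) ∪
          ({w | w ∈ AF.accepts} ∩ {w | w ∈ AS.accepts}) := by
  classical
  set eS := Fintype.equivFin QS
  set eD := Fintype.equivFin QD
  set eF := Fintype.equivFin QF
  refine ⟨Fin (Fintype.card QS) × Fin (Fintype.card QD) × Fin (Fintype.card QF),
    inferInstance,
    { step := fun q a => (eS (AS.step (eS.symm q.1) a), eD (AD.step (eD.symm q.2.1) a),
        eF (AF.step (eF.symm q.2.2) a)),
      start := (eS AS.start, eD AD.start, eF AF.start),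
      accept := {q | (eD.symm q.2.1 ∈ AD.accept ∧ eS.symm q.1 ∉ AS.accept) ∨
        (eF.symm q.2.2 ∈ AF.accept ∧ eS.symm q.1 ∈ AS.accept)} }, ?_, ?_⟩
  · simp only [Fintype.card_prod, Fintype.card_fin]
    rw [mul_assoc]
    exact Nat.mul_le_mul (by nlinarith) (le_refl _)
  · have key : ∀ (w : List L) (s : QS) (d : QD) (f : QF),
        DFA.evalFrom ⟨fun q a => (eS (AS.step (eS.symm q.1) a), eD (AD.step (eD.symm q.2.1) a),
          eF (AF.step (eF.symm q.2.2) a)),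
          (eS AS.start, eD AD.start, eF AF.start),
          {q | (eD.symm q.2.1 ∈ AD.accept ∧ eS.symm q.1 ∉ AS.accept) ∨
            (eF.symm q.2.2 ∈ AF.accept ∧ eS.symm q.1 ∈ AS.accept)}⟩ (eS s, eD d, eF f) w =
          (eS (AS.evalFrom s w), eD (AD.evalFrom d w), eF (AF.evalFrom f w)) := by
      intro w
      induction w with
      | nil => intro s d f; simp [DFA.evalFrom]
      | cons a w ih =>
        intro s d f
        simp only [DFA.evalFrom, List.foldl_cons] at *
        simpa using ih (AS.step s a) (AD.step d a) (AF.step f a)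
    ext w
    have := key w AS.start AD.start AF.start
    simp only [DFA.mem_accepts, DFA.eval, Set.mem_union, Set.mem_inter_iff, Set.mem_compl_iff,
      Set.mem_setOf_eq] at *
    rw [this]
    simp only [Set.mem_setOf_eq, Equiv.symm_apply_apply]
end
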